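/- arXiv:2104.12006 — 2 statements merged into one kernel-verified Lean document; each statement's English description precedes it below -/
import Mathlib

section
/- Let (ξ_i) be i.i.d. ℕ-valued random variables with s_n := ξ₁ + … + ξ_n, u(n) := Σ_{k=1}^n P(s_k = n) and a(n) := Σ_{k=1}^n u(k). Suppose ℓ(t) := E[ξ ∧ t] is slowly varying. Then a(n) ∼ n/ℓ(n) as n → ∞. -/
open Filter Topology

/-- Triangle sum reindexing for convolutions. -/
lemma conv_swap (A : ℕ → ℕ → ℝ) (n : ℕ) :
    ∑ m ∈ Finset.range (n+1), ∑ j ∈ Finset.range (m+1), A j (m - j)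
      = ∑ i ∈ Finset.range (n+1), ∑ j ∈ Finset.range (n + 1 - i), A j i := by
  rw [Finset.sum_comm' (t' := Finset.range (n+1)) (s' := fun j => Finset.Icc j n)
    (by intro m j; simp only [Finset.mem_range, Finset.mem_Icc]; omega)]
  have h1 : ∀ j ∈ Finset.range (n+1), ∑ m ∈ Finset.Icc j n, A j (m - j)
      = ∑ i ∈ Finset.range (n + 1 - j), A j i := by
    intro j _
    rw [← Finset.Ico_add_one_right_eq_Icc, Finset.sum_Ico_eq_sum_range]
    exact Finset.sum_congr rfl fun i _ => by rw [Nat.add_sub_cancel_left]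
  rw [Finset.sum_congr rfl h1]
  exact Finset.sum_comm' (by intro j i; simp only [Finset.mem_range]; omega)

/-- Renewal-theoretic asymptotics: for i.i.d. `ℕ`-valued `ξᵢ` with distribution `f`
(`F r n = P(s_r = n)` the `r`-fold convolution power), `u(n) := Σ_{k=1}^n P(s_k = n)`,
`a(n) := Σ_{k=1}^n u(k)`, if `ℓ(t) := E[ξ ∧ t]` is slowly varying then `a(n) ∼ n/ℓ(n)`. -/
theorem stmt10 (f : ℕ → ℝ) (hf0 : f 0 = 0) (hfnn : ∀ k, 0 ≤ f k) (hsum : ∑' k, f k = 1)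
    (F : ℕ → ℕ → ℝ) (hF0 : ∀ n, F 0 n = if n = 0 then 1 else 0)
    (hFsucc : ∀ r n, F (r + 1) n = ∑ k ∈ Finset.range (n + 1), f k * F r (n - k))
    (u a : ℕ → ℝ)
    (hu : ∀ n, u n = ∑ k ∈ Finset.Icc 1 n, F k n)
    (ha : ∀ n, a n = ∑ k ∈ Finset.Icc 1 n, u k)
    (ℓ : ℝ → ℝ) (hℓ : ∀ t, ℓ t = ∑' j : ℕ, f j * min (j : ℝ) t)
    (hslow : ∀ lam > 0, Tendsto (fun t => ℓ (lam * t) / ℓ t) atTop (nhds 1)) :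
    Tendsto (fun n : ℕ => a n * ℓ n / n) atTop (nhds 1) := by
  classical
  have hSf : Summable f := by
    by_contra h
    rw [tsum_eq_zero_of_not_summable h] at hsum
    norm_num at hsum
  set S : ℕ → ℝ := fun t => ∑ j ∈ Finset.range (t+1), f j with hS
  set T : ℕ → ℝ := fun t => 1 - S t with hT
  have hSle : ∀ t, S t ≤ 1 := by
    intro t
    rw [← hsum]
    exact Summable.sum_le_tsum _ (fun i _ => hfnn i) hSf
  have hTnn : ∀ t, 0 ≤ T t := fun t => by simp only [hT]; linarith [hSle t]
  have hT0 : Tendsto T atTop (𝓝 0) := by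
    have h1 : Tendsto (fun t => ∑ j ∈ Finset.range t, f j) atTop (𝓝 1) := by
      simpa [hsum] using hSf.hasSum.tendsto_sum_nat
    have h2 : Tendsto S atTop (𝓝 1) := by
      have := h1.comp (tendsto_add_atTop_nat 1)
      exact this
    have := (tendsto_const_nhds (x := (1:ℝ))).sub h2
    simpa [hT] using this
  -- basic facts about F
  have hFnn : ∀ k m, 0 ≤ F k m := by
    intro k
    induction k with
    | zero => intro m; rw [hF0]; positivity
    | succ k ih =>
      intro m; rw [hFsucc]
      exact Finset.sum_nonneg fun j _ => mul_nonneg (hfnn j) (ih _)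
  have hFzero : ∀ k m, m < k → F k m = 0 := by
    intro k
    induction k with
    | zero => intro m hm; omega
    | succ k ih =>
      intro m hm
      rw [hFsucc]
      apply Finset.sum_eq_zero
      intro j hj
      have hj' := Finset.mem_range.mp hj
      rcases Nat.eq_zero_or_pos j with h0 | h0
      · simp [h0, hf0]
      · rw [ih (m - j) (by omega), mul_zero]
  set g : ℕ → ℝ := fun m => ∑ k ∈ Finset.range (m+1), F k m with hg
  have hgnn : ∀ m, 0 ≤ g m := fun m => Finset.sum_nonneg fun k _ => hFnn k m
  set G : ℕ → ℕ → ℝ := fun k n => ∑ m ∈ Finset.range (n+1), F k m with hG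
  have hGstep : ∀ k n, ∑ m ∈ Finset.range (n+1), F k m * T (n - m) = G k n - G (k+1) n := by
    intro k n
    have h1 : G (k+1) n = ∑ i ∈ Finset.range (n+1), ∑ j ∈ Finset.range (n+1-i), f j * F k i := by
      simp only [hG, hFsucc]
      exact conv_swap (fun j i => f j * F k i) n
    have h2 : G (k+1) n = ∑ i ∈ Finset.range (n+1), S (n - i) * F k i := by
      rw [h1]
      refine Finset.sum_congr rfl fun i hi => ?_
      rw [← Finset.sum_mul]
      have hi' := Finset.mem_range.mp hi
      have : n + 1 - i = (n - i) + 1 := by omega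
      rw [this]
    rw [h2]
    simp only [hG]
    rw [← Finset.sum_sub_distrib]
    refine Finset.sum_congr rfl fun m hm => ?_
    simp only [hT]
    ring
  have hkey1 : ∀ n, ∑ m ∈ Finset.range (n+1), g m * T (n - m) = 1 := by
    intro n
    have hgex : ∀ m ∈ Finset.range (n+1), g m = ∑ k ∈ Finset.range (n+1), F k m := by
      intro m hm
      have hmn := Finset.mem_range.mp hm
      apply Finset.sum_subset
      · intro k hk; simp only [Finset.mem_range] at hk ⊢; omega
      · intro k hk hk2
        simp only [Finset.mem_range] at hk hk2
        exact hFzero k m (by omega)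
    calc ∑ m ∈ Finset.range (n+1), g m * T (n-m)
        = ∑ m ∈ Finset.range (n+1), ∑ k ∈ Finset.range (n+1), F k m * T (n-m) := by
          refine Finset.sum_congr rfl fun m hm => ?_
          rw [hgex m hm, Finset.sum_mul]
      _ = ∑ k ∈ Finset.range (n+1), ∑ m ∈ Finset.range (n+1), F k m * T (n-m) :=
          Finset.sum_comm
      _ = ∑ k ∈ Finset.range (n+1), (G k n - G (k+1) n) :=
          Finset.sum_congr rfl fun k _ => hGstep k n
      _ = G 0 n - G (n+1) n := Finset.sum_range_sub' (fun k => G k n) (n+1)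
      _ = 1 := by
          have h0 : G 0 n = 1 := by simp [hG, hF0]
          have h1 : G (n+1) n = 0 := Finset.sum_eq_zero fun m hm =>
            hFzero _ _ (by simpa using Finset.mem_range.mp hm)
          rw [h0, h1, sub_zero]
  set L : ℕ → ℝ := fun k => ∑ t ∈ Finset.range k, T t with hL
  have hLnn : ∀ k, 0 ≤ L k := fun k => Finset.sum_nonneg fun t _ => hTnn t
  have hLmono : ∀ ⦃k k' : ℕ⦄, k ≤ k' → L k ≤ L k' := by
    intro k k' hk
    exact Finset.sum_le_sum_of_subset_of_nonneg
      (Finset.range_subset_range.mpr hk) (fun t _ _ => hTnn t)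
  have hkey2 : ∀ N : ℕ, (N : ℝ) = ∑ m ∈ Finset.range N, g m * L (N - m) := by
    intro N
    calc (N : ℝ) = ∑ _n ∈ Finset.range N, (1:ℝ) := by simp
    _ = ∑ n ∈ Finset.range N, ∑ m ∈ Finset.range (n+1), g m * T (n-m) :=
        Finset.sum_congr rfl fun n _ => (hkey1 n).symm
    _ = ∑ m ∈ Finset.range N, ∑ n ∈ Finset.Ico m N, g m * T (n-m) := by
        apply Finset.sum_comm'
        intro n m; simp only [Finset.mem_range, Finset.mem_Ico]; omega
    _ = ∑ m ∈ Finset.range N, g m * L (N - m) := by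
        refine Finset.sum_congr rfl fun m hm => ?_
        rw [← Finset.mul_sum]
        congr 1
        rw [Finset.sum_Ico_eq_sum_range]
        exact Finset.sum_congr rfl fun i _ => by rw [Nat.add_sub_cancel_left]
  -- summability of the terms defining ℓ
  have hsummin : ∀ t : ℝ, 0 ≤ t → Summable (fun j : ℕ => f j * min (j:ℝ) t) := by
    intro t ht
    refine Summable.of_nonneg_of_le
      (fun j => mul_nonneg (hfnn j) (le_min (Nat.cast_nonneg j) ht))
      (fun j => mul_le_mul_of_nonneg_left (min_le_right _ _) (hfnn j))
      (hSf.mul_right t)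
  have hmono : ∀ s t : ℝ, 0 ≤ s → s ≤ t → ℓ s ≤ ℓ t := by
    intro s t hs hst
    rw [hℓ, hℓ]
    exact Summable.tsum_le_tsum
      (fun j => mul_le_mul_of_nonneg_left (min_le_min le_rfl hst) (hfnn j))
      (hsummin s hs) (hsummin t (hs.trans hst))
  have hℓ1 : ℓ 1 = 1 := by
    rw [hℓ]
    have heq : ∀ j : ℕ, f j * min (j:ℝ) 1 = f j - (if j = 0 then f 0 else 0) := by
      intro j
      rcases Nat.eq_zero_or_pos j with h | h
      · simp [h]
      · have hmin : min (j:ℝ) 1 = 1 := min_eq_right (by exact_mod_cast h)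
        have : j ≠ 0 := by omega
        simp [hmin, this]
    rw [tsum_congr heq,
      Summable.tsum_sub hSf (summable_of_ne_finset_zero (s := {0})
        (fun j hj => by simp only [Finset.mem_singleton] at hj; simp [hj])),
      hsum, tsum_ite_eq, hf0, sub_zero]
  have hTtsum : ∀ t : ℕ, (∑' j : ℕ, f j * (if t < j then (1:ℝ) else 0)) = T t := by
    intro t
    have heq : ∀ j : ℕ, f j * (if t < j then (1:ℝ) else 0)
        = f j - (if j < t + 1 then f j else 0) := by
      intro j
      by_cases h : t < j
      · have : ¬ j < t + 1 := by omega
        simp [h, this]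
      · have : j < t + 1 := by omega
        simp [h, this]
    have hsit : Summable (fun j : ℕ => if j < t + 1 then f j else 0) := by
      refine summable_of_ne_finset_zero (s := Finset.range (t+1)) (fun j hj => ?_)
      simp only [Finset.mem_range] at hj
      simp [hj]
    rw [tsum_congr heq, Summable.tsum_sub hSf hsit, hsum]
    have : (∑' j : ℕ, if j < t + 1 then f j else 0) = S t := by
      rw [tsum_eq_sum (s := Finset.range (t+1))
        (fun j hj => by simp only [Finset.mem_range] at hj; simp [hj])]
      exact Finset.sum_congr rfl fun j hj => by
        simp [Finset.mem_range.mp hj]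
    rw [this]
  have hLℓ : ∀ k : ℕ, ℓ k = L k := by
    intro k
    rw [hℓ]
    have hmin : ∀ j : ℕ, f j * min (j:ℝ) k
        = ∑ t ∈ Finset.range k, f j * (if t < j then (1:ℝ) else 0) := by
      intro j
      rw [← Finset.mul_sum]
      congr 1
      rw [Finset.sum_boole]
      have hfil : (Finset.range k).filter (fun t => t < j) = Finset.range (min j k) := by
        ext t; simp only [Finset.mem_filter, Finset.mem_range, lt_min_iff]; tauto
      rw [hfil]
      simp [Nat.cast_min]
    have hsummand : ∀ t : ℕ, Summable (fun j : ℕ => f j * (if t < j then (1:ℝ) else 0)) := by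
      intro t
      refine Summable.of_nonneg_of_le (fun j => mul_nonneg (hfnn j) (by split <;> norm_num))
        (fun j => ?_) hSf
      by_cases h : t < j <;> simp [h, hfnn j]
    rw [tsum_congr hmin, Summable.tsum_finsetSum (fun t _ => hsummand t)]
    exact Finset.sum_congr rfl fun t _ => hTtsum t
  have hcesaro : Tendsto (fun n : ℕ => ℓ n / n) atTop (𝓝 0) := by
    have := hT0.cesaro
    refine this.congr fun n => ?_
    rw [hLℓ n, div_eq_inv_mul]
  -- relation of g-sums to a
  have hu0 : u 0 = 0 := by rw [hu]; simp
  have hunn : ∀ n, 0 ≤ u n := fun n => by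
    rw [hu]; exact Finset.sum_nonneg fun k _ => hFnn k n
  have hann : ∀ n, 0 ≤ a n := fun n => by
    rw [ha]; exact Finset.sum_nonneg fun k _ => hunn k
  have hga : ∀ N : ℕ, ∑ m ∈ Finset.range (N+1), g m = 1 + a N := by
    intro N
    have h1 : ∀ m, g m = F 0 m + u m := by
      intro m
      simp only [hg]
      rw [Finset.range_eq_Ico, Finset.sum_eq_sum_Ico_succ_bot (Nat.succ_pos m),
        Nat.succ_eq_add_one, Finset.Ico_add_one_right_eq_Icc, ← hu]
    have h2 : ∑ m ∈ Finset.range (N+1), F 0 m = 1 := by simp [hF0]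
    have h3 : ∑ m ∈ Finset.range (N+1), u m = a N := by
      rw [Finset.range_eq_Ico, Finset.sum_eq_sum_Ico_succ_bot (Nat.succ_pos N),
        Nat.succ_eq_add_one, Finset.Ico_add_one_right_eq_Icc, hu0, zero_add, ha]
    simp only [h1, Finset.sum_add_distrib, h2, h3]
  have hℓnn : ∀ t : ℝ, 0 ≤ t → 0 ≤ ℓ t := by
    intro t ht
    rw [hℓ]
    exact tsum_nonneg fun j => mul_nonneg (hfnn j) (le_min (Nat.cast_nonneg j) ht)
  have hℓge1 : ∀ t : ℝ, 1 ≤ t → 1 ≤ ℓ t := by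
    intro t ht
    calc (1:ℝ) = ℓ 1 := hℓ1.symm
    _ ≤ ℓ t := hmono 1 t zero_le_one ht
  -- lower bound : N ≤ ℓ(N) (1 + a N)
  have hlow : ∀ N : ℕ, (N:ℝ) ≤ ℓ N * (1 + a N) := by
    intro N
    rw [hLℓ N]
    calc (N:ℝ) = ∑ m ∈ Finset.range N, g m * L (N-m) := hkey2 N
      _ ≤ ∑ m ∈ Finset.range N, g m * L N :=
          Finset.sum_le_sum fun m _ =>
            mul_le_mul_of_nonneg_left (hLmono (Nat.sub_le N m)) (hgnn m)
      _ = L N * ∑ m ∈ Finset.range N, g m := by rw [Finset.mul_sum]; exact Finset.sum_congr rfl fun m _ => mul_comm _ _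
      _ ≤ L N * (1 + a N) := by
          refine mul_le_mul_of_nonneg_left ?_ (hLnn N)
          calc ∑ m ∈ Finset.range N, g m ≤ ∑ m ∈ Finset.range (N+1), g m :=
                Finset.sum_le_sum_of_subset_of_nonneg
                  (Finset.range_subset_range.mpr (Nat.le_succ N)) (fun m _ _ => hgnn m)
            _ = 1 + a N := hga N
  -- upper bound machinery
  have hupp : ∀ ε : ℝ, 0 < ε → ∀ n : ℕ, 1 ≤ (n:ℕ) → 1 ≤ ε * n →
      ℓ (ε * n) * (1 + a n) ≤ (1 + ε) * n + 1 := by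
    intro ε hε n hn hεn
    set K : ℕ := ⌈ε * (n:ℝ)⌉₊ with hK
    have hKge : (ε * n : ℝ) ≤ K := Nat.le_ceil _
    have hKpos : 1 ≤ K := by
      rw [hK]
      exact Nat.one_le_ceil_iff.mpr (by linarith)
    have hKlt : (K:ℝ) < ε * n + 1 := Nat.ceil_lt_add_one (by linarith)
    set N : ℕ := n + K with hN
    have step1 : ℓ (ε * n) * (1 + a n) ≤ (N:ℝ) := by
      rw [hkey2 N]
      calc ℓ (ε * n) * (1 + a n) ≤ L K * (1 + a n) := by
            refine mul_le_mul_of_nonneg_right ?_ (by linarith [hann n])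
            rw [← hLℓ K]
            exact hmono _ _ (by positivity) hKge
        _ = ∑ m ∈ Finset.range (n+1), g m * L K := by
            rw [← hga n, Finset.mul_sum]
            exact Finset.sum_congr rfl fun m _ => mul_comm _ _
        _ ≤ ∑ m ∈ Finset.range (n+1), g m * L (N - m) := by
            refine Finset.sum_le_sum fun m hm => ?_
            refine mul_le_mul_of_nonneg_left (hLmono ?_) (hgnn m)
            have := Finset.mem_range.mp hm
            omega
        _ ≤ ∑ m ∈ Finset.range N, g m * L (N - m) := by
            refine Finset.sum_le_sum_of_subset_of_nonneg
              (Finset.range_subset_range.mpr (by omega)) (fun m _ _ => ?_)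
            exact mul_nonneg (hgnn m) (hLnn _)
    calc ℓ (ε * n) * (1 + a n) ≤ (N:ℝ) := step1
      _ = (n:ℝ) + K := by rw [hN]; push_cast; ring
      _ ≤ (1 + ε) * n + 1 := by linarith
  -- conclude
  rw [tendsto_order]
  constructor
  · intro c hc
    have h1 : Tendsto (fun n : ℕ => 1 - ℓ n / n) atTop (𝓝 1) := by
      simpa using tendsto_const_nhds.sub hcesaro
    filter_upwards [h1.eventually (eventually_gt_nhds hc), eventually_ge_atTop 1]
      with n hn hn1
    refine hn.trans_le ?_
    have hnpos : (0:ℝ) < n := by exact_mod_cast hn1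
    have hkeyn : (n:ℝ) - ℓ n ≤ a n * ℓ n := by nlinarith [hlow n]
    calc 1 - ℓ (n:ℝ) / n = ((n:ℝ) - ℓ n) / n := by field_simp
      _ ≤ a n * ℓ n / n := (div_le_div_iff_of_pos_right hnpos).mpr hkeyn
  · intro b hb
    set ε : ℝ := (b - 1)/2 with hε
    have hεpos : 0 < ε := by rw [hε]; linarith
    have hεn : Tendsto (fun n : ℕ => ε * (n:ℝ)) atTop atTop :=
      Tendsto.const_mul_atTop hεpos tendsto_natCast_atTop_atTop
    have hslow' : Tendsto (fun n : ℕ => ℓ n / ℓ (ε * n)) atTop (𝓝 1) := by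
      have h1 := (hslow (1/ε) (by positivity)).comp hεn
      refine h1.congr fun n => ?_
      simp only [Function.comp]
      congr 2
      field_simp
    have h3 : Tendsto (fun n : ℕ => 1 + ε + 1/(n:ℝ)) atTop (𝓝 (1+ε)) := by
      simpa using (tendsto_const_nhds (x := 1 + ε)).add tendsto_one_div_atTop_nhds_zero_nat
    have hmain : Tendsto (fun n : ℕ => (ℓ n / ℓ (ε * n)) * (1 + ε + 1/n)) atTop
        (𝓝 (1 + ε)) := by
      simpa using hslow'.mul h3
    have hb' : 1 + ε < b := by rw [hε]; linarith
    filter_upwards [hmain.eventually (eventually_lt_nhds hb'), eventually_ge_atTop 1,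
      hεn.eventually_ge_atTop 1] with n h1 hn1 hεn1
    refine lt_of_le_of_lt ?_ h1
    have hnpos : (0:ℝ) < n := by exact_mod_cast hn1
    have hℓε : (1:ℝ) ≤ ℓ (ε * n) := hℓge1 _ hεn1
    have hℓn : (1:ℝ) ≤ ℓ n := hℓge1 _ (by exact_mod_cast hn1)
    have hA := hupp ε hεpos n hn1 hεn1
    have h6 : a n ≤ ((1 + ε) * n + 1) / ℓ (ε * n) := by
      rw [le_div_iff₀ (by linarith : (0:ℝ) < ℓ (ε * n))]
      nlinarith [hA, hℓε, hann n]
    calc a n * ℓ n / n ≤ (((1 + ε) * n + 1) / ℓ (ε * n)) * ℓ n / n := by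
          gcongr
      _ = (ℓ n / ℓ (ε * n)) * (1 + ε + 1/n) := by
          field_simp
end

section
/- For ξ ∈ D_{↑,∞} with ξ(∞-) = ∞, define 𝒟(ξ)(t) := sup{s ≥ t : ξ(s) = ξ(t)}. Then 𝒟(ξ)(t) < ∞ for all t, and 𝒟(ξ) ∈ D_{↑,∞}, i.e. 𝒟(ξ) is non-decreasing and right-continuous. -/
open Set Filter Topology

/-- For non-decreasing right-continuous `ξ` with `ξ(∞-) = ∞`, the waiting-time functional
`𝒟(ξ)(t) := sup{s ≥ t : ξ(s) = ξ(t)}` is finite (the set is bounded above), non-decreasing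
and right-continuous, i.e. `𝒟(ξ) ∈ D_{↑,∞}`. -/
theorem stmt13 (ξ : ℝ → ℝ) (hmono : Monotone ξ)
    (hrc : ∀ x, ContinuousWithinAt ξ (Ici x) x)
    (htop : Tendsto ξ atTop atTop) :
    (∀ t, BddAbove {s : ℝ | t ≤ s ∧ ξ s = ξ t}) ∧
    Monotone (fun t => sSup {s : ℝ | t ≤ s ∧ ξ s = ξ t}) ∧
    ∀ t, ContinuousWithinAt (fun t' => sSup {s : ℝ | t' ≤ s ∧ ξ s = ξ t'}) (Ici t) t := by
  set D : ℝ → ℝ := fun t => sSup {s : ℝ | t ≤ s ∧ ξ s = ξ t} with hD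
  have hbdd : ∀ t, BddAbove {s : ℝ | t ≤ s ∧ ξ s = ξ t} := by
    intro t
    obtain ⟨M, hM⟩ := eventually_atTop.1 (htop.eventually (eventually_gt_atTop (ξ t)))
    refine ⟨M, fun s hs => ?_⟩
    by_contra h
    push_neg at h
    exact absurd hs.2 (ne_of_gt (hM s h.le))
  have hne : ∀ t, t ∈ {s : ℝ | t ≤ s ∧ ξ s = ξ t} := fun t => ⟨le_refl t, rfl⟩
  have hself : ∀ t, t ≤ D t := fun t => le_csSup (hbdd t) (hne t)
  have hplateau : ∀ t s, t ≤ s → s < D t → ξ s = ξ t := by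
    intro t s hts hsD
    obtain ⟨s', hs', hss'⟩ := exists_lt_of_lt_csSup ⟨t, hne t⟩ hsD
    exact le_antisymm (hs'.2 ▸ hmono hss'.le) (hmono hts)
  have hmonoD : Monotone D := by
    intro t t' htt'
    refine csSup_le ⟨t, hne t⟩ fun s hs => ?_
    rcases le_total s t' with h | h
    · exact h.trans (hself t')
    · exact le_csSup (hbdd t')
        ⟨h, le_antisymm (hs.2.le.trans (hmono htt')) (hmono h)⟩
  have key : ∀ t b, D t < b → ∃ t', t < t' ∧ D t' < b := by
    intro t b hb
    by_contra h
    push_neg at h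
    set c : ℝ := (D t + b) / 2 with hc
    have hDc : D t < c := by simp only [hc]; linarith
    have hcb : c < b := by simp only [hc]; linarith
    have htc : t < c := (hself t).trans_lt hDc
    have hconst : ∀ t' ∈ Ioo t c, ξ c = ξ t' := fun t' ht' =>
      hplateau t' c ht'.2.le (hcb.trans_le (h t' ht'.1))
    have htend : Tendsto ξ (𝓝[>] t) (𝓝 (ξ t)) := (hrc t).mono Ioi_subset_Ici_self
    have htend' : Tendsto (fun _ : ℝ => ξ c) (𝓝[>] t) (𝓝 (ξ t)) := by
      refine htend.congr' ?_
      filter_upwards [Ioo_mem_nhdsGT_of_mem ⟨le_refl t, htc⟩] with x hx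
      exact (hconst x hx).symm
    have heq : ξ t = ξ c := tendsto_nhds_unique htend' tendsto_const_nhds
    exact absurd (le_csSup (hbdd t) ⟨htc.le, heq.symm⟩) (not_le.2 hDc)
  refine ⟨hbdd, hmonoD, fun t => ?_⟩
  rw [ContinuousWithinAt]
  refine tendsto_order.2 ⟨fun a ha => ?_, fun b hb => ?_⟩
  · filter_upwards [self_mem_nhdsWithin] with x hx
    exact ha.trans_le (hmonoD hx)
  · obtain ⟨t', htt', hDt'⟩ := key t b hb
    filter_upwards [Ico_mem_nhdsGE_of_mem ⟨le_refl t, htt'⟩] with x hx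
    exact (hmonoD hx.2.le).trans_lt hDt'
end
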